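/- Let x_0, x_1, …, x_d ∈ ℝ^d, let m = (1/(d+1)) Σ_{i=0}^d x_i and let W = Σ_{i=0}^d (x_i − m)(x_i − m)^T be the SSP matrix of these d+1 points. Then det W = (1/(d+1)) · (det[x_1 − x_0 | x_2 − x_0 | … | x_d − x_0])², where [x_1 − x_0 | … | x_d − x_0] is the d×d matrix with columns x_i − x_0; equivalently, det W equals 1/(d+1) times the squared d-dimensional volume of the parallelepiped spanned by x_0,…,x_d. -/

import Mathlib

open Matrix Finset

/-- Lemma 4.1 of the paper.  For `d + 1` points `x_0,…,x_d ∈ ℝ^d` with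
mean `m` and SSP matrix `W = Σ_i (x_i − m)(x_i − m)ᵀ`, one has
`det W = (1/(d+1)) · det(x_1 − x_0, …, x_d − x_0)²`, i.e. `1/(d+1)` times the squared
`d`-dimensional volume of the parallelepiped spanned by the points. -/
theorem det_ssp_eq_volume_sq {d : ℕ} (x : Fin (d + 1) → Fin d → ℝ)
    (m : Fin d → ℝ) (hm : m = ((d : ℝ) + 1)⁻¹ • ∑ i, x i)
    (W : Matrix (Fin d) (Fin d) ℝ)
    (hW : W = ∑ i, Matrix.vecMulVec (x i - m) (x i - m)) :
    W.det = ((d : ℝ) + 1)⁻¹ * (Matrix.of fun k l : Fin d => x l.succ k - x 0 k).det ^ 2 := by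
  set c : ℝ := ((d : ℝ) + 1)⁻¹ with hc
  have hd : ((d : ℝ) + 1) ≠ 0 := by positivity
  have hc1 : c * ((d : ℝ) + 1) = 1 := inv_mul_cancel₀ hd
  set B : Matrix (Fin d) (Fin d) ℝ := Matrix.of fun k l : Fin d => x l.succ k - x 0 k with hB
  set M : Matrix (Fin d) (Fin d) ℝ := 1 - c • Matrix.of (fun _ _ => (1:ℝ)) with hM
  have key : W = B * M * Bᵀ := by
    subst hW hm
    ext k l
    have hsum : ∀ (f : Fin (d+1) → ℝ), (∑ a : Fin d, f a.succ) = (∑ i, f i) - f 0 := by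
      intro f; rw [Fin.sum_univ_succ]; ring
    simp only [Matrix.sum_apply, Matrix.vecMulVec_apply, Pi.sub_apply, Pi.smul_apply,
      Finset.sum_apply, smul_eq_mul, Matrix.mul_apply, Matrix.transpose_apply, hM,
      Matrix.sub_apply, Matrix.one_apply, Matrix.smul_apply, Matrix.of_apply, hB, mul_one]
    simp only [mul_sub, sub_mul, mul_ite, mul_one, mul_zero, ite_mul, zero_mul,
      Finset.sum_sub_distrib, Finset.sum_ite_eq', Finset.mem_univ, if_true,
      ← Finset.sum_mul, ← Finset.mul_sum, Finset.sum_const, Finset.card_univ,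
      Fintype.card_fin, nsmul_eq_mul]
    rw [hsum fun i => x i k * x i l, hsum fun i => x i k, hsum fun i => x i l]
    have hd' : (1 + (d:ℝ)) ≠ 0 := by positivity
    generalize (∑ i : Fin (d + 1), x i k) = P
    generalize (∑ i : Fin (d + 1), x i l) = Q
    generalize (∑ i : Fin (d + 1), x i k * x i l) = S
    generalize x 0 k = a
    generalize x 0 l = b
    clear_value c B M
    rw [hc]
    push_cast
    field_simp
    ring
  rw [key, Matrix.det_mul, Matrix.det_mul, Matrix.det_transpose]
  have hdetM : M.det = c := by
    have h2 : M = 1 + Matrix.replicateCol (Fin 1) (fun _ => -c) * Matrix.replicateRow (Fin 1) (fun _ => (1:ℝ)) := by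
      ext i j
      simp [hM, Matrix.mul_apply, Matrix.sub_apply, Matrix.one_apply, sub_eq_add_neg]
    rw [h2]; erw [Matrix.det_one_add_replicateCol_mul_replicateRow (ι := Fin 1) (fun _ => -c) (fun _ => (1:ℝ))]
    simp only [dotProduct, Finset.sum_const, Finset.card_univ, Fintype.card_fin,
      nsmul_eq_mul, mul_neg, mul_one]
    linear_combination -hc1
  rw [hdetM]; ring
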